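/- Let q > 0, q ≠ 1, and R_q = 2/(1-q) if 0 < q < 1, R_q = 2q/(q-1) if q > 1. Define Sin_q(x) = (𝓔_q(ix) − 𝓔_q(−ix))/(2i) and Cos_q(x) = (𝓔_q(ix) + 𝓔_q(−ix))/2, where 𝓔_q(z) = ∑_{n=0}^∞ z^n/{n}_q!. Then for every real x with |x| < R_q, the numbers Sin_q(x) and Cos_q(x) are real and satisfy −1 ≤ Cos_q(x) ≤ 1 and −1 ≤ Sin_q(x) ≤ 1. -/

import Mathlib

/-- The symbol `{n}_q = 2(1-q^n)/((1-q)(1+q^(n-1)))` (for `n ≥ 1`). -/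
noncomputable def qBrace (q : ℝ) (n : ℕ) : ℝ :=
  2 * (1 - q ^ n) / ((1 - q) * (1 + q ^ (n - 1)))

/-- The factorial `{n}_q! = {1}_q {2}_q ⋯ {n}_q`, with `{0}_q! = 1`. -/
noncomputable def qBraceFact (q : ℝ) (n : ℕ) : ℝ := ∏ k ∈ Finset.range n, qBrace q (k + 1)

/-- The radius `R_q = 2/(1-q)` for `0 < q < 1` and `R_q = 2q/(q-1)` for `q > 1`. -/
noncomputable def Rq (q : ℝ) : ℝ := if q < 1 then 2 / (1 - q) else 2 * q / (q - 1)

/-- The improved q-exponential function `𝓔_q(z) = ∑_{n=0}^∞ z^n/{n}_q!`. -/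
noncomputable def impExp (q : ℝ) (z : ℂ) : ℂ := ∑' n : ℕ, z ^ n / (qBraceFact q n : ℂ)

/-- The improved q-sine `Sin_q(x) = (𝓔_q(ix) − 𝓔_q(−ix))/(2i)`. -/
noncomputable def impSin (q : ℝ) (x : ℝ) : ℂ :=
  (impExp q (Complex.I * x) - impExp q (-(Complex.I * x))) / (2 * Complex.I)

/-- The improved q-cosine `Cos_q(x) = (𝓔_q(ix) + 𝓔_q(−ix))/2`. -/
noncomputable def impCos (q : ℝ) (x : ℝ) : ℂ :=
  (impExp q (Complex.I * x) + impExp q (-(Complex.I * x))) / 2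


section lemmas
variable {q : ℝ} (hq : 0 < q) (hq1 : q ≠ 1)
include hq hq1

lemma pow_ne_one' (n : ℕ) : q ^ (n+1) ≠ 1 := by
  rcases lt_or_gt_of_ne hq1 with h | h
  · exact ne_of_lt (pow_lt_one₀ hq.le h (Nat.succ_ne_zero n))
  · exact ne_of_gt (one_lt_pow₀ h (Nat.succ_ne_zero n))

lemma div_pos' (n : ℕ) : 0 < (1 - q ^ (n+1)) / (1 - q) := by
  rcases lt_or_gt_of_ne hq1 with h | h
  · have hh : q ^ (n+1) < 1 := pow_lt_one₀ hq.le h (Nat.succ_ne_zero n)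
    exact div_pos (by linarith) (by linarith)
  · have hh : 1 < q ^ (n+1) := one_lt_pow₀ h (Nat.succ_ne_zero n)
    exact div_pos_of_neg_of_neg (by linarith) (by linarith)

lemma qBrace_pos (n : ℕ) : 0 < qBrace q (n+1) := by
  have h1 : 0 < 1 + q ^ n := by positivity
  have h2 := div_pos' hq hq1 n
  unfold qBrace
  simp only [Nat.add_sub_cancel]
  rw [div_mul_eq_div_div, mul_div_assoc]
  positivity

lemma qBraceFact_pos (n : ℕ) : 0 < qBraceFact q n :=
  Finset.prod_pos fun k _ => qBrace_pos hq hq1 k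

omit hq hq1 in
lemma qBraceFact_succ (n : ℕ) : qBraceFact q (n+1) = qBraceFact q n * qBrace q (n+1) :=
  Finset.prod_range_succ _ _

lemma key_rel (k : ℕ) :
    (1 - q ^ (k+1)) * (qBraceFact q (k+1))⁻¹
      = (1 - q) * (1 + q ^ k) / 2 * (qBraceFact q k)⁻¹ := by
  have hF : qBraceFact q k ≠ 0 := (qBraceFact_pos hq hq1 k).ne'
  have h1 : (1:ℝ) - q ≠ 0 := sub_ne_zero.mpr (fun h => hq1 h.symm)
  have h2 : (1:ℝ) + q ^ k ≠ 0 := by positivity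
  have h3 : (1:ℝ) - q ^ (k+1) ≠ 0 := sub_ne_zero.mpr (pow_ne_one' hq hq1 k).symm
  rw [qBraceFact_succ]
  unfold qBrace
  simp only [Nat.add_sub_cancel]
  field_simp

lemma S_rec (n : ℕ) :
    (1 - q ^ (n+1)) * ∑ k ∈ Finset.range (n+2),
        (-1:ℝ)^k * (qBraceFact q k)⁻¹ * (qBraceFact q (n+1-k))⁻¹
      = (1-q) * (q^n - 1) / 2 * ∑ k ∈ Finset.range (n+1),
        (-1:ℝ)^k * (qBraceFact q k)⁻¹ * (qBraceFact q (n-k))⁻¹ := by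
  have hsplit : ∀ k ∈ Finset.range (n+2),
      (1 - q^(n+1)) * ((-1:ℝ)^k * (qBraceFact q k)⁻¹ * (qBraceFact q (n+1-k))⁻¹)
        = (-1:ℝ)^k * ((1 - q^k) * (qBraceFact q k)⁻¹) * (qBraceFact q (n+1-k))⁻¹
          + (-1:ℝ)^k * q^k * (qBraceFact q k)⁻¹
              * ((1 - q^(n+1-k)) * (qBraceFact q (n+1-k))⁻¹) := by
    intro k hk
    have hk' : k ≤ n+1 := by simpa [Nat.lt_succ_iff] using hk
    have hpow : q^k * q^(n+1-k) = q^(n+1) := by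
      rw [← pow_add]; congr 1; omega
    linear_combination (-1:ℝ)^k * (qBraceFact q k)⁻¹ * (qBraceFact q (n+1-k))⁻¹ * hpow
  rw [Finset.mul_sum, Finset.sum_congr rfl hsplit, Finset.sum_add_distrib]
  have hA : ∑ k ∈ Finset.range (n+2),
        (-1:ℝ)^k * ((1 - q^k) * (qBraceFact q k)⁻¹) * (qBraceFact q (n+1-k))⁻¹
      = ∑ k ∈ Finset.range (n+1),
          (-1:ℝ)^(k+1) * ((1-q)*(1+q^k)/2 * (qBraceFact q k)⁻¹) * (qBraceFact q (n-k))⁻¹ := by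
    rw [Finset.sum_range_succ']
    simp only [pow_zero, sub_self, zero_mul, mul_zero, one_mul, add_zero]
    refine Finset.sum_congr rfl fun k hk => ?_
    rw [show n + 1 - (k+1) = n - k from by omega, key_rel hq hq1 k]
  have hB : ∑ k ∈ Finset.range (n+2),
        (-1:ℝ)^k * q^k * (qBraceFact q k)⁻¹ * ((1 - q^(n+1-k)) * (qBraceFact q (n+1-k))⁻¹)
      = ∑ k ∈ Finset.range (n+1),
          (-1:ℝ)^k * q^k * (qBraceFact q k)⁻¹
            * ((1-q)*(1+q^(n-k))/2 * (qBraceFact q (n-k))⁻¹) := by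
    rw [Finset.sum_range_succ]
    simp only [Nat.sub_self, pow_zero, sub_self, zero_mul, mul_zero, add_zero]
    refine Finset.sum_congr rfl fun k hk => ?_
    have hk' : k ≤ n := by simpa [Nat.lt_succ_iff] using hk
    rw [show n + 1 - k = (n - k) + 1 from by omega, key_rel hq hq1 (n-k)]
  rw [hA, hB, ← Finset.sum_add_distrib, Finset.mul_sum]
  refine Finset.sum_congr rfl fun k hk => ?_
  have hk' : k ≤ n := by simpa [Nat.lt_succ_iff] using hk
  have hpow : q^k * q^(n-k) = q^n := by rw [← pow_add]; congr 1; omega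
  linear_combination (1-q)/2 * (qBraceFact q k)⁻¹ * (qBraceFact q (n-k))⁻¹ * (-1:ℝ)^k * hpow

lemma S_zero (n : ℕ) :
    ∑ k ∈ Finset.range (n+2),
      (-1:ℝ)^k * (qBraceFact q k)⁻¹ * (qBraceFact q (n+1-k))⁻¹ = 0 := by
  induction n with
  | zero => simp [Finset.sum_range_succ, qBraceFact]
  | succ n ih =>
    have h := S_rec hq hq1 (n+1)
    rw [ih, mul_zero] at h
    have hne : (1 - q ^ (n+1+1)) ≠ 0 := sub_ne_zero.mpr (pow_ne_one' hq hq1 (n+1)).symm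
    exact (mul_eq_zero.mp h).resolve_left hne

end lemmas


open Filter

lemma tendsto_qBrace {q : ℝ} (hq : 0 < q) (hq1 : q ≠ 1) :
    Tendsto (fun n => qBrace q (n+1)) atTop (nhds (Rq q)) := by
  rcases lt_or_gt_of_ne hq1 with h | h
  · have h0 : Tendsto (fun n : ℕ => q ^ n) atTop (nhds 0) :=
      tendsto_pow_atTop_nhds_zero_of_lt_one hq.le h
    have hfun : (fun n : ℕ => qBrace q (n+1))
        = (fun n : ℕ => 2 * (1 - q * q ^ n)) / (fun n : ℕ => (1 - q) * (1 + q ^ n)) := by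
      funext n
      simp only [qBrace, Nat.add_sub_cancel, Pi.div_apply, pow_succ]
      ring_nf
    rw [hfun, Rq, if_pos h]
    have hnum : Tendsto (fun n : ℕ => 2 * (1 - q * q ^ n)) atTop (nhds (2 * (1 - q * 0))) :=
      ((h0.const_mul q).const_sub 1).const_mul 2
    have hden : Tendsto (fun n : ℕ => (1 - q) * (1 + q ^ n)) atTop (nhds ((1 - q) * (1 + 0))) :=
      (h0.const_add 1).const_mul (1 - q)
    have := hnum.div hden (by rw [mul_ne_zero_iff]; constructor <;> [linarith; norm_num])
    simpa using this
  · have hr0 : (0:ℝ) ≤ q⁻¹ := by positivity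
    have hr1 : q⁻¹ < 1 := inv_lt_one_of_one_lt₀ h
    have h0 : Tendsto (fun n : ℕ => q⁻¹ ^ n) atTop (nhds 0) :=
      tendsto_pow_atTop_nhds_zero_of_lt_one hr0 hr1
    have hfun : (fun n : ℕ => qBrace q (n+1))
        = (fun n : ℕ => 2 * (q⁻¹ ^ n - q)) / (fun n : ℕ => (1 - q) * (q⁻¹ ^ n + 1)) := by
      funext n
      have hqn : q ^ n ≠ 0 := pow_ne_zero _ (ne_of_gt hq)
      have hq' : q ≠ 0 := ne_of_gt hq
      simp only [qBrace, Nat.add_sub_cancel, Pi.div_apply, pow_succ, inv_pow]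
      rw [div_eq_div_iff]
      · field_simp
      · apply mul_ne_zero (by intro hc; exact hq1 (by linarith [sub_eq_zero.mp hc]))
        positivity
      · apply mul_ne_zero (by intro hc; exact hq1 (by linarith [sub_eq_zero.mp hc]))
        have : (0:ℝ) < (q ^ n)⁻¹ + 1 := by positivity
        exact ne_of_gt this
    rw [hfun, Rq, if_neg (not_lt.mpr h.le)]
    have hnum : Tendsto (fun n : ℕ => 2 * (q⁻¹ ^ n - q)) atTop (nhds (2 * (0 - q))) :=
      (h0.sub_const q).const_mul 2
    have hden : Tendsto (fun n : ℕ => (1 - q) * (q⁻¹ ^ n + 1)) atTop (nhds ((1 - q) * (0 + 1))) :=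
      (h0.add_const 1).const_mul (1 - q)
    have hd0 : (1 - q) * (0 + 1) ≠ 0 := by
      rw [mul_ne_zero_iff]; constructor <;> [linarith; norm_num]
    have := hnum.div hden hd0
    have heq : 2 * (0 - q) / ((1 - q) * (0 + 1)) = 2 * q / (q - 1) := by
      rw [div_eq_div_iff (by simpa using hd0) (by intro hc; exact hq1 (by linarith [sub_eq_zero.mp hc]))]
      ring
    rwa [heq] at this


section main
variable {q : ℝ} (hq : 0 < q) (hq1 : q ≠ 1) {x : ℝ} (hx : |x| < Rq q)
include hq hq1 hx

lemma summable_real : Summable (fun n : ℕ => |x| ^ n * (qBraceFact q n)⁻¹) := by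
  have hR : 0 < Rq q := lt_of_le_of_lt (abs_nonneg x) hx
  set c : ℝ := (|x| + Rq q) / 2 with hc
  have hc0 : 0 < c := by positivity
  have hxc : |x| < c := by rw [hc]; linarith
  have hcR : c < Rq q := by rw [hc]; linarith
  have hev : ∀ᶠ n : ℕ in atTop, c < qBrace q (n+1) :=
    (tendsto_qBrace hq hq1).eventually (eventually_gt_nhds hcR)
  refine summable_of_ratio_norm_eventually_le (r := |x| / c)
    ((div_lt_one hc0).mpr hxc) ?_
  filter_upwards [hev] with n hn
  have hF : 0 < qBraceFact q n := qBraceFact_pos hq hq1 n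
  have hB : 0 < qBrace q (n+1) := qBrace_pos hq hq1 n
  have h1 : (0:ℝ) ≤ |x| ^ n * (qBraceFact q n)⁻¹ := by positivity
  have h2 : (0:ℝ) ≤ |x| ^ (n+1) * (qBraceFact q (n+1))⁻¹ := by
    have := qBraceFact_pos hq hq1 (n+1); positivity
  rw [Real.norm_of_nonneg h2, Real.norm_of_nonneg h1]
  have hfs : qBraceFact q (n+1) = qBraceFact q n * qBrace q (n+1) :=
    Finset.prod_range_succ _ _
  rw [hfs, mul_inv, pow_succ]
  have hinv : (qBrace q (n+1))⁻¹ ≤ c⁻¹ := by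
    apply inv_anti₀ hc0 hn.le
  calc |x| ^ n * |x| * ((qBraceFact q n)⁻¹ * (qBrace q (n+1))⁻¹)
      ≤ |x| ^ n * |x| * ((qBraceFact q n)⁻¹ * c⁻¹) := by
        apply mul_le_mul_of_nonneg_left (mul_le_mul_of_nonneg_left hinv (by positivity))
          (by positivity)
    _ = |x| / c * (|x| ^ n * (qBraceFact q n)⁻¹) := by
        rw [div_eq_mul_inv]; ring

lemma summable_norm_aux (z : ℂ) (hz : ‖z‖ = |x|) :
    Summable (fun n : ℕ => ‖z ^ n / (qBraceFact q n : ℂ)‖) := by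
  have : (fun n : ℕ => ‖z ^ n / (qBraceFact q n : ℂ)‖)
      = fun n : ℕ => |x| ^ n * (qBraceFact q n)⁻¹ := by
    funext n
    rw [norm_div, norm_pow, hz, Complex.norm_real,
      Real.norm_of_nonneg (qBraceFact_pos hq hq1 n).le, div_eq_mul_inv]
  rw [this]
  exact summable_real hq hq1 hx

lemma prod_eq_one : impExp q (Complex.I * x) * impExp q (-(Complex.I * x)) = 1 := by
  have h1 : ‖Complex.I * (x:ℂ)‖ = |x| := by
    rw [norm_mul, Complex.norm_I, one_mul, Complex.norm_real, Real.norm_eq_abs]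
  have h2 : ‖-(Complex.I * (x:ℂ))‖ = |x| := by rw [norm_neg]; exact h1
  rw [impExp, impExp,
    tsum_mul_tsum_eq_tsum_sum_antidiagonal_of_summable_norm
      (summable_norm_aux hq hq1 hx _ h1) (summable_norm_aux hq hq1 hx _ h2)]
  have key : (fun n : ℕ => ∑ kl ∈ Finset.HasAntidiagonal.antidiagonal n,
        (Complex.I * x) ^ kl.1 / (qBraceFact q kl.1 : ℂ)
          * ((-(Complex.I * x)) ^ kl.2 / (qBraceFact q kl.2 : ℂ)))
      = fun n : ℕ => if n = 0 then (1:ℂ) else 0 := by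
    funext n
    rw [Finset.Nat.sum_antidiagonal_eq_sum_range_succ_mk]
    match n with
    | 0 => simp [qBraceFact]
    | (m+1) =>
      rw [if_neg (Nat.succ_ne_zero m)]
      have hreal := S_zero hq hq1 m
      have : ∑ k ∈ Finset.range (m+2),
          (Complex.I * x) ^ k / (qBraceFact q k : ℂ)
            * ((-(Complex.I * x)) ^ (m+1-k) / (qBraceFact q (m+1-k) : ℂ))
          = (Complex.I * x) ^ (m+1) * (-1) ^ (m+1)
            * ((∑ k ∈ Finset.range (m+2),
                (-1:ℝ)^k * (qBraceFact q k)⁻¹ * (qBraceFact q (m+1-k))⁻¹ : ℝ) : ℂ) := by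
        push_cast
        rw [Finset.mul_sum]
        refine Finset.sum_congr rfl fun k hk => ?_
        have hk' : k ≤ m+1 := by
          simpa [Nat.lt_succ_iff] using hk
        have hpow : (Complex.I * x) ^ k * (Complex.I * x) ^ (m+1-k) = (Complex.I * x) ^ (m+1) := by
          rw [← pow_add]; congr 1; omega
        have hk2 : ((-1:ℂ)) ^ k * (-1) ^ k = 1 := by
          rw [← mul_pow]; norm_num
        have hsign : ((-1:ℂ)) ^ (m+1-k) * (-1) ^ k = (-1) ^ (m+1) := by
          rw [← pow_add]; congr 1; omega
        have hsign' : ((-1:ℂ)) ^ (m+1-k) = (-1) ^ (m+1) * (-1) ^ k := by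
          rw [← hsign, mul_assoc, hk2, mul_one]
        rw [neg_pow (Complex.I * (x:ℂ)) (m+1-k)]
        simp only [div_eq_mul_inv]
        linear_combination
          ((qBraceFact q k : ℂ))⁻¹ * ((qBraceFact q (m+1-k) : ℂ))⁻¹
              * ((Complex.I * x) ^ k * (Complex.I * x) ^ (m+1-k)) * hsign'
            + ((qBraceFact q k : ℂ))⁻¹ * ((qBraceFact q (m+1-k) : ℂ))⁻¹
              * ((-1:ℂ) ^ (m+1) * (-1) ^ k) * hpow
      rw [this, hreal]
      simp
  rw [key, tsum_ite_eq]

end main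


lemma impExp_neg_conj (q : ℝ) (x : ℝ) :
    impExp q (-(Complex.I * x)) = (starRingEnd ℂ) (impExp q (Complex.I * x)) := by
  rw [impExp, impExp]
  simp only [← Complex.star_def]
  rw [tsum_star]
  congr 1
  funext n
  simp only [star_div₀, star_pow]
  congr 1
  · congr 1
    simp [Complex.star_def, Complex.conj_ofReal]
  · simp [Complex.star_def, Complex.conj_ofReal]


/-- For real `x` with `|x| < R_q`, `Sin_q(x)` and `Cos_q(x)` are real and lie in `[-1, 1]`. -/
theorem impSin_impCos_real_bounded (q : ℝ) (hq : 0 < q) (hq1 : q ≠ 1) (x : ℝ)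
    (hx : |x| < Rq q) :
    (impCos q x).im = 0 ∧ (impSin q x).im = 0 ∧
    -1 ≤ (impCos q x).re ∧ (impCos q x).re ≤ 1 ∧
    -1 ≤ (impSin q x).re ∧ (impSin q x).re ≤ 1 := by
  set E := impExp q (Complex.I * x) with hE
  have hconj : impExp q (-(Complex.I * x)) = (starRingEnd ℂ) E := impExp_neg_conj q x
  have hprod : (Complex.normSq E : ℂ) = 1 := by
    rw [← Complex.mul_conj, ← hconj]
    exact prod_eq_one hq hq1 hx
  have hnsq : E.re * E.re + E.im * E.im = 1 := by
    have := Complex.ofReal_eq_one.mp hprod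
    rwa [Complex.normSq_apply] at this
  have hcos : impCos q x = ((E.re : ℝ) : ℂ) := by
    rw [impCos, hconj, ← hE, Complex.add_conj]
    push_cast
    ring
  have hsin : impSin q x = ((E.im : ℝ) : ℂ) := by
    rw [impSin, hconj, ← hE, Complex.sub_conj]
    have hI : (2:ℂ) * Complex.I ≠ 0 := by simp [Complex.I_ne_zero]
    field_simp
    push_cast
    ring
  rw [hcos, hsin]
  simp only [Complex.ofReal_im, Complex.ofReal_re]
  refine ⟨trivial, trivial, by nlinarith, by nlinarith, by nlinarith, by nlinarith⟩
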